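/- Let n be even and let σ be a permutation of Z_n mapping each coset of the subgroup Z_2 = {0, n/2} into itself. Then σ preserves quasi-independence: E ⊆ Z_n is quasi-independent (as a subset of the n-th roots of unity) if and only if σ(E) is. -/

import Mathlib

def QuasiIndep (S : Set ℂ) : Prop :=
  ∀ (s : Finset ℂ) (ε : ℂ → ℤ), ↑s ⊆ S →
    (∀ z ∈ s, ε z = 0 ∨ ε z = 1 ∨ ε z = -1) →
    (∑ z ∈ s, (ε z : ℂ) * z) = 0 → ∀ z ∈ s, ε z = 0

noncomputable def zeta (n : ℕ) (k : ZMod n) : ℂ :=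
  Complex.exp (2 * Real.pi * Complex.I * k.val / n)

lemma zeta_pow (n : ℕ) (k : ZMod n) :
    zeta n k = Complex.exp (2 * Real.pi * Complex.I / n) ^ k.val := by
  unfold zeta
  rw [← Complex.exp_nat_mul]
  congr 1
  ring

lemma zeta_inj (n : ℕ) (hn : n ≠ 0) : Function.Injective (zeta n) := by
  haveI : NeZero n := ⟨hn⟩
  intro a b h
  rw [zeta_pow, zeta_pow] at h
  have := (Complex.isPrimitiveRoot_exp n hn).pow_inj (ZMod.val_lt a) (ZMod.val_lt b) h
  exact ZMod.val_injective n this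

lemma zeta_add (n : ℕ) (hn : n ≠ 0) (a b : ZMod n) :
    zeta n (a + b) = zeta n a * zeta n b := by
  haveI : NeZero n := ⟨hn⟩
  have h1 := (Complex.isPrimitiveRoot_exp n hn).pow_eq_one
  rw [zeta_pow, zeta_pow, zeta_pow, ← pow_add, ZMod.val_add]
  conv_rhs => rw [← Nat.div_add_mod (a.val + b.val) n]
  rw [pow_add, pow_mul, h1, one_pow, one_mul]

lemma zeta_half (n : ℕ) (hn : 2 ≤ n) (heven : Even n) :
    zeta n ((n / 2 : ℕ) : ZMod n) = -1 := by
  haveI : NeZero n := ⟨by omega⟩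
  have hval : (((n / 2 : ℕ) : ZMod n)).val = n / 2 := ZMod.val_natCast_of_lt (by omega)
  unfold zeta
  rw [hval]
  obtain ⟨m, hm⟩ := heven
  have hn0 : (n : ℂ) ≠ 0 := by
    exact_mod_cast (show n ≠ 0 by omega)
  have h2 : ((n / 2 : ℕ) : ℂ) = (n : ℂ) / 2 := by
    rw [Nat.cast_div ⟨m, by omega⟩ (by norm_num)]
    norm_num
  have harg : 2 * (Real.pi : ℂ) * Complex.I * ((n / 2 : ℕ) : ℂ) / n = Real.pi * Complex.I := by
    rw [h2]; field_simp
  rw [harg, Complex.exp_pi_mul_I]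

lemma zeta_addhalf (n : ℕ) (hn : 2 ≤ n) (heven : Even n) (x : ZMod n) :
    zeta n (x + ((n / 2 : ℕ) : ZMod n)) = - zeta n x := by
  rw [zeta_add n (by omega), zeta_half n hn heven, mul_neg_one]

lemma fwd (n : ℕ) (hn : 2 ≤ n) (heven : Even n) (σ : Equiv.Perm (ZMod n))
    (hσ : ∀ x : ZMod n, σ x = x ∨ σ x = x + ((n / 2 : ℕ) : ZMod n))
    (E : Set (ZMod n)) :
    QuasiIndep (zeta n '' E) → QuasiIndep (zeta n '' (σ '' E)) := by
  classical
  intro H s ε hs hε hsum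
  have hn0 : n ≠ 0 := by omega
  have hinj := zeta_inj n hn0
  have hzσ : ∀ x : ZMod n,
      zeta n (σ x) = (if σ x = x then (1 : ℂ) else -1) * zeta n x := by
    intro x
    by_cases h : σ x = x
    · simp [h]
    · have h2 : σ x = x + ((n / 2 : ℕ) : ZMod n) := (hσ x).resolve_left h
      rw [if_neg h, h2, zeta_addhalf n hn heven x, neg_one_mul]
  have hcinj : Function.Injective (fun x : ZMod n => zeta n (σ x)) :=
    hinj.comp σ.injective
  set t : Finset (ZMod n) := s.preimage (fun x => zeta n (σ x)) hcinj.injOn with htdef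
  have hmem : ∀ x : ZMod n, x ∈ t ↔ zeta n (σ x) ∈ s := by
    intro x; simp [htdef, Finset.mem_preimage]
  have htE : ∀ x ∈ t, x ∈ E := by
    intro x hx
    obtain ⟨y, ⟨x', hx'E, hx'⟩, hy⟩ := hs ((hmem x).1 hx)
    have : x' = x := σ.injective (hinj (by rw [hx', hy]))
    rwa [← this]
  have hsurj : ∀ z ∈ s, ∃ x ∈ t, zeta n (σ x) = z := by
    intro z hz
    obtain ⟨y, ⟨x', hx'E, hx'⟩, hy⟩ := hs hz
    refine ⟨x', ?_, by rw [hx', hy]⟩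
    rw [hmem, hx', hy]; exact hz
  set d : ZMod n → ℤ := fun x => if σ x = x then 1 else -1 with hddef
  set ε' : ℂ → ℤ := fun w =>
    if h : ∃ x, zeta n x = w then d h.choose * ε (zeta n (σ h.choose)) else 0 with hε'def
  have hε'eq : ∀ x : ZMod n, ε' (zeta n x) = d x * ε (zeta n (σ x)) := by
    intro x
    have hex : ∃ y, zeta n y = zeta n x := ⟨x, rfl⟩
    have hch : hex.choose = x := hinj hex.choose_spec
    rw [hε'def]
    simp only [dif_pos hex, hch]
  have hdz : ∀ x : ZMod n, ((d x : ℂ)) * zeta n x = zeta n (σ x) := by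
    intro x
    rw [hzσ x, hddef]
    by_cases h : σ x = x <;> simp [h]
  have key := H (t.image (zeta n)) ε'
    (by
      rw [Finset.coe_image]
      exact Set.image_mono (fun x hx => htE x hx))
    (by
      intro w hw
      obtain ⟨x, hx, rfl⟩ := Finset.mem_image.1 hw
      rw [hε'eq]
      have h1 := hε _ ((hmem x).1 hx)
      rw [hddef]
      rcases h1 with h1 | h1 | h1 <;> rw [h1] <;> by_cases h : σ x = x <;> simp [h])
    (by
      rw [Finset.sum_image (fun x _ y _ h => hinj h)]
      have : ∀ x ∈ t, (ε' (zeta n x) : ℂ) * zeta n x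
          = (ε (zeta n (σ x)) : ℂ) * zeta n (σ x) := by
        intro x hx
        rw [hε'eq]
        push_cast
        rw [mul_assoc, mul_comm ((ε (zeta n (σ x)) : ℂ)), ← mul_assoc, hdz, mul_comm]
      rw [Finset.sum_congr rfl this]
      rw [← hsum]
      exact Finset.sum_bij (fun x _ => zeta n (σ x))
        (fun x hx => (hmem x).1 hx)
        (fun x _ y _ h => σ.injective (hinj h))
        (fun z hz => by obtain ⟨x, hx, hxz⟩ := hsurj z hz; exact ⟨x, hx, hxz⟩)
        (fun x hx => rfl))
  intro z hz
  obtain ⟨x, hx, hxz⟩ := hsurj z hz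
  have h0 := key (zeta n x) (Finset.mem_image_of_mem _ hx)
  rw [hε'eq, hxz] at h0
  rw [hddef] at h0
  by_cases h : σ x = x
  · simpa [h] using h0
  · simp [h] at h0; omega

theorem stmt_12 (n : ℕ) (hn : 2 ≤ n) (heven : Even n) (σ : Equiv.Perm (ZMod n))
    (hσ : ∀ x : ZMod n, σ x = x ∨ σ x = x + ((n / 2 : ℕ) : ZMod n))
    (E : Set (ZMod n)) :
    QuasiIndep (zeta n '' E) ↔ QuasiIndep (zeta n '' (σ '' E)) := by
  constructor
  · exact fwd n hn heven σ hσ E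
  · intro H
    have hcc : ((n / 2 : ℕ) : ZMod n) + ((n / 2 : ℕ) : ZMod n) = 0 := by
      obtain ⟨m, hm⟩ := heven
      rw [← Nat.cast_add, (show n / 2 + n / 2 = n by omega), ZMod.natCast_self]
    have hσ' : ∀ x : ZMod n, σ.symm x = x ∨ σ.symm x = x + ((n / 2 : ℕ) : ZMod n) := by
      intro x
      rcases hσ (σ.symm x) with h | h <;> rw [Equiv.apply_symm_apply] at h
      · exact Or.inl h.symm
      · right
        have h1 : σ.symm x = x - ((n / 2 : ℕ) : ZMod n) := eq_sub_of_add_eq h.symm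
        rw [h1, sub_eq_add_neg, neg_eq_of_add_eq_zero_left hcc]
    have := fwd n hn heven σ.symm hσ' (σ '' E) H
    rwa [Equiv.symm_image_image] at this
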